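/- Let λ, μ ∈ ℝ, let Ω ⊆ ℝ³ be open with coordinates (x, y, t), and let u, S : Ω → ℝ be C² functions with u_x ≠ 0 and S_x ≠ 0 on Ω, satisfying the Lax pair relations u_x S_t = μ u_t S_x and u_x S_y = λ u_y S_x on Ω. Then (μ − λ) u_x u_{yt} + λ(1 − μ) u_y u_{xt} + μ(λ − 1) u_t u_{xy} = 0 on Ω; that is, u solves the dispersionless Hirota equation a₁ u_x u_{yt} + a₂ u_y u_{xt} + a₃ u_t u_{xy} = 0 with a₁ = μ − λ, a₂ = λ(1 − μ), a₃ = μ(λ − 1), and these constants satisfy a₁ + a₂ + a₃ = 0 and a₁λμ + a₂μ + a₃λ = 0. -/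

import Mathlib

/-- Partial derivative of `f : ℝⁿ → ℝ` in the `i`-th coordinate direction. -/
noncomputable def pd {n : ℕ} (i : Fin n) (f : (Fin n → ℝ) → ℝ) (x : Fin n → ℝ) : ℝ :=
  fderiv ℝ f x (Pi.single i 1)

section helpers
variable {n : ℕ} {Ω : Set (Fin n → ℝ)} {f g : (Fin n → ℝ) → ℝ} {X : Fin n → ℝ}

lemma contDiffAt_pd (hΩ : IsOpen Ω) (hf : ContDiffOn ℝ 2 f Ω) (hX : X ∈ Ω) (i : Fin n) :
    ContDiffAt ℝ 1 (pd i f) X := by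
  have h1 : ContDiffAt ℝ 2 f X := hf.contDiffAt (hΩ.mem_nhds hX)
  have h2 : ContDiffAt ℝ 1 (fderiv ℝ f) X := h1.fderiv_right (by norm_num)
  exact h2.clm_apply contDiffAt_const

lemma diff_pd (hΩ : IsOpen Ω) (hf : ContDiffOn ℝ 2 f Ω) (hX : X ∈ Ω) (i : Fin n) :
    DifferentiableAt ℝ (pd i f) X :=
  (contDiffAt_pd hΩ hf hX i).differentiableAt one_ne_zero

lemma pd_pd_eq (hΩ : IsOpen Ω) (hf : ContDiffOn ℝ 2 f Ω) (hX : X ∈ Ω) (i j : Fin n) :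
    pd j (pd i f) X = fderiv ℝ (fderiv ℝ f) X (Pi.single j 1) (Pi.single i 1) := by
  have h1 : ContDiffAt ℝ 2 f X := hf.contDiffAt (hΩ.mem_nhds hX)
  have h2 : DifferentiableAt ℝ (fderiv ℝ f) X :=
    (h1.fderiv_right (m := 1) (by norm_num)).differentiableAt one_ne_zero
  have := fderiv_clm_apply (𝕜 := ℝ) h2 (differentiableAt_const (Pi.single i (1:ℝ)))
  simp only [pd]
  rw [show pd i f = fun y => (fderiv ℝ f y) (Pi.single i 1) from rfl, this]
  simp

lemma pd_comm (hΩ : IsOpen Ω) (hf : ContDiffOn ℝ 2 f Ω) (hX : X ∈ Ω) (i j : Fin n) :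
    pd j (pd i f) X = pd i (pd j f) X := by
  rw [pd_pd_eq hΩ hf hX, pd_pd_eq hΩ hf hX]
  exact (hf.contDiffAt (hΩ.mem_nhds hX)).isSymmSndFDerivAt (by simp) _ _

lemma pd_congr (hΩ : IsOpen Ω) (hX : X ∈ Ω) (h : ∀ Y ∈ Ω, f Y = g Y) (j : Fin n) :
    pd j f X = pd j g X := by
  have : f =ᶠ[nhds X] g := by
    filter_upwards [hΩ.mem_nhds hX] with Y hY using h Y hY
  simp only [pd, this.fderiv_eq]

lemma pd_mul (hf : DifferentiableAt ℝ f X) (hg : DifferentiableAt ℝ g X) (j : Fin n) :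
    pd j (fun Y => f Y * g Y) X = pd j f X * g X + f X * pd j g X := by
  simp only [pd, fderiv_fun_mul hf hg]
  simp [smul_eq_mul]
  ring

lemma pd_const_mul (c : ℝ) (hf : DifferentiableAt ℝ f X) (j : Fin n) :
    pd j (fun Y => c * f Y) X = c * pd j f X := by
  simp only [pd, fderiv_const_mul hf c]; simp

end helpers

lemma key_step {n : ℕ} {Ω : Set (Fin n → ℝ)} (hΩ : IsOpen Ω) {X : Fin n → ℝ} (hX : X ∈ Ω)
    (c : ℝ) {f1 f2 g1 g2 : (Fin n → ℝ) → ℝ}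
    (hf1 : DifferentiableAt ℝ f1 X) (hf2 : DifferentiableAt ℝ f2 X)
    (hg1 : DifferentiableAt ℝ g1 X) (hg2 : DifferentiableAt ℝ g2 X)
    (h : ∀ Y ∈ Ω, f1 Y * f2 Y = c * g1 Y * g2 Y) (j : Fin n) :
    pd j f1 X * f2 X + f1 X * pd j f2 X
      = c * (pd j g1 X * g2 X + g1 X * pd j g2 X) := by
  have h1 : pd j (fun Y => f1 Y * f2 Y) X = pd j (fun Y => c * (g1 Y * g2 Y)) X :=
    pd_congr hΩ hX (fun Y hY => by rw [h Y hY]; ring) j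
  rwa [pd_mul hf1 hf2, pd_const_mul c (hg1.fun_mul hg2), pd_mul hg1 hg2] at h1

/-- The Lax pair `u_x S_t = μ u_t S_x`, `u_x S_y = λ u_y S_x` implies the dispersionless
Hirota equation `a₁ u_x u_{yt} + a₂ u_y u_{xt} + a₃ u_t u_{xy} = 0` with
`a₁ = μ − λ`, `a₂ = λ(1−μ)`, `a₃ = μ(λ−1)`; these constants satisfy
`a₁ + a₂ + a₃ = 0` and `a₁λμ + a₂μ + a₃λ = 0`.
Coordinates on `ℝ³` are `x = 0`, `y = 1`, `t = 2`. -/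
theorem lax_pair_implies_hirota
    (lam μ : ℝ) (Ω : Set (Fin 3 → ℝ)) (hΩ : IsOpen Ω)
    (u S : (Fin 3 → ℝ) → ℝ)
    (hu : ContDiffOn ℝ 2 u Ω) (hS : ContDiffOn ℝ 2 S Ω)
    (hux : ∀ X ∈ Ω, pd 0 u X ≠ 0) (hSx : ∀ X ∈ Ω, pd 0 S X ≠ 0)
    (hLax1 : ∀ X ∈ Ω, pd 0 u X * pd 2 S X = μ * pd 2 u X * pd 0 S X)
    (hLax2 : ∀ X ∈ Ω, pd 0 u X * pd 1 S X = lam * pd 1 u X * pd 0 S X) :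
    (∀ X ∈ Ω,
      (μ - lam) * pd 0 u X * pd 2 (pd 1 u) X
        + lam * (1 - μ) * pd 1 u X * pd 2 (pd 0 u) X
        + μ * (lam - 1) * pd 2 u X * pd 1 (pd 0 u) X = 0) ∧
    (μ - lam) + lam * (1 - μ) + μ * (lam - 1) = 0 ∧
    (μ - lam) * lam * μ + lam * (1 - μ) * μ + μ * (lam - 1) * lam = 0 := by
  refine ⟨fun X hX => ?_, by ring, by ring⟩
  have du : ∀ i : Fin 3, DifferentiableAt ℝ (pd i u) X := fun i => diff_pd hΩ hu hX i
  have dS : ∀ i : Fin 3, DifferentiableAt ℝ (pd i S) X := fun i => diff_pd hΩ hS hX i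
  have hE1 := fun j => key_step hΩ hX μ (du 0) (dS 2) (du 2) (dS 0) hLax1 j
  have hE2 := fun j => key_step hΩ hX lam (du 0) (dS 1) (du 1) (dS 0) hLax2 j
  have E1y := hE1 1
  have E1x := hE1 0
  have E2t := hE2 2
  have E2x := hE2 0
  rw [pd_comm hΩ hS hX 2 1] at E1y
  rw [pd_comm hΩ hu hX 2 1] at E1y
  rw [pd_comm hΩ hS hX 2 0, pd_comm hΩ hu hX 2 0] at E1x
  rw [pd_comm hΩ hS hX 1 0, pd_comm hΩ hu hX 1 0] at E2x
  have key : pd 0 S X * (pd 0 u X *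
      ((μ - lam) * pd 0 u X * pd 2 (pd 1 u) X
        + lam * (1 - μ) * pd 1 u X * pd 2 (pd 0 u) X
        + μ * (lam - 1) * pd 2 u X * pd 1 (pd 0 u) X)) = 0 := by
    linear_combination
      (-(pd 0 u X ^ 2)) * E1y + (pd 0 u X ^ 2) * E2t
        - (μ * pd 2 u X * pd 0 u X) * E2x + (lam * pd 1 u X * pd 0 u X) * E1x
        + (pd 0 u X * pd 1 (pd 0 u) X - lam * pd 1 u X * pd 0 (pd 0 u) X) * hLax1 X hX
        + (μ * pd 2 u X * pd 0 (pd 0 u) X - pd 0 u X * pd 2 (pd 0 u) X) * hLax2 X hX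
  have h2 := (mul_eq_zero.mp key).resolve_left (hSx X hX)
  exact (mul_eq_zero.mp h2).resolve_left (hux X hX)
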